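/- For a quasi-Hopf algebra H and a left H-comodule algebra B, λ(b_{[0]}) p̃_λ [S⁻¹(b_{[-1]})⊗1_B] = p̃_λ [1_H⊗b] and [S(b_{[-1]})⊗1] q̃_λ λ(b_{[0]}) = [1⊗b] q̃_λ for all b ∈ B. -/

import Mathlib

open TensorProduct

noncomputable section

namespace QuasiHopfPaper

variable (k : Type) [Field k]
variable (H : Type) [Ring H] [Algebra k H]

/-- A quasi-bialgebra in the sense of Drinfeld. -/
structure QuasiBialgebra where
  comul : H →ₐ[k] H ⊗[k] H
  counit : H →ₐ[k] k
  Phi : H ⊗[k] (H ⊗[k] H)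
  PhiInv : H ⊗[k] (H ⊗[k] H)
  Phi_inv_mul : Phi * PhiInv = 1
  inv_Phi_mul : PhiInv * Phi = 1
  quasi_coassoc : ∀ h : H,
    Algebra.TensorProduct.map (AlgHom.id k H) comul (comul h)
      = Phi * (Algebra.TensorProduct.assoc k k k H H H)
          (Algebra.TensorProduct.map comul (AlgHom.id k H) (comul h)) * PhiInv
  counit_right : ∀ h : H,
    (Algebra.TensorProduct.rid k k H)
      (Algebra.TensorProduct.map (AlgHom.id k H) counit (comul h)) = h
  counit_left : ∀ h : H,
    (Algebra.TensorProduct.lid k H)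
      (Algebra.TensorProduct.map counit (AlgHom.id k H) (comul h)) = h
  cocycle :
    (Algebra.TensorProduct.includeRight (R := k) (A := H)
        (B := H ⊗[k] (H ⊗[k] H)) Phi)
      * (Algebra.TensorProduct.map (AlgHom.id k H)
          ((Algebra.TensorProduct.assoc k k k H H H).toAlgHom.comp
            (Algebra.TensorProduct.map comul (AlgHom.id k H))) Phi)
      * ((Algebra.TensorProduct.map (AlgHom.id k H)
            (Algebra.TensorProduct.assoc k k k H H H).toAlgHom)
          ((Algebra.TensorProduct.assoc k k k H (H ⊗[k] H) H) (Phi ⊗ₜ[k] (1 : H))))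
    = (Algebra.TensorProduct.map (AlgHom.id k H)
          (Algebra.TensorProduct.map (AlgHom.id k H) comul) Phi)
      * ((Algebra.TensorProduct.assoc k k k H H (H ⊗[k] H))
          (Algebra.TensorProduct.map comul (AlgHom.id k (H ⊗[k] H)) Phi))
  normalized :
    Algebra.TensorProduct.map (AlgHom.id k H)
      ((Algebra.TensorProduct.lid k H).toAlgHom.comp
        (Algebra.TensorProduct.map counit (AlgHom.id k H))) Phi = 1

variable {k H}

/-- The quasi-Hopf antipode axioms for `(S, α, β)` over a quasi-bialgebra. -/
structure IsAntipode (Q : QuasiBialgebra k H) (S : H →ₗ[k] H) (α β : H) : Prop where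
  anti_mul : ∀ a b : H, S (a * b) = S b * S a
  map_one : S 1 = 1
  bijective : Function.Bijective S
  left_id : ∀ h : H,
    LinearMap.mul' k H
      (TensorProduct.map S (LinearMap.mulLeft k α) (Q.comul h)) = Q.counit h • α
  right_id : ∀ h : H,
    LinearMap.mul' k H
      (TensorProduct.map (LinearMap.mulRight k β) S (Q.comul h)) = Q.counit h • β
  phi_id :
    LinearMap.mul' k H
      (TensorProduct.map (LinearMap.mulRight k β)
        ((LinearMap.mul' k H).comp (TensorProduct.map S (LinearMap.mulLeft k α)))
        Q.Phi) = 1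
  phiInv_id :
    LinearMap.mul' k H
      (TensorProduct.map ((LinearMap.mulRight k α).comp S)
        ((LinearMap.mul' k H).comp
          (TensorProduct.map LinearMap.id ((LinearMap.mulLeft k β).comp S)))
        Q.PhiInv) = 1


variable (Q : QuasiBialgebra k H)

set_option maxHeartbeats 1000000

/-- doc -/
structure LeftComoduleAlgebra (B : Type) [Ring B] [Algebra k B] where
  lambda : B →ₐ[k] H ⊗[k] B
  Phi : H ⊗[k] (H ⊗[k] B)
  PhiInv : H ⊗[k] (H ⊗[k] B)
  Phi_inv_mul : Phi * PhiInv = 1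
  inv_Phi_mul : PhiInv * Phi = 1
  coassoc : ∀ b : B,
    Algebra.TensorProduct.map (AlgHom.id k H) lambda (lambda b) * Phi
      = Phi * (Algebra.TensorProduct.assoc k k k H H B)
          (Algebra.TensorProduct.map Q.comul (AlgHom.id k B) (lambda b))
  pentagon :
    (Algebra.TensorProduct.includeRight (R := k) (A := H)
        (B := H ⊗[k] (H ⊗[k] B)) Phi)
      * (Algebra.TensorProduct.map (AlgHom.id k H)
          ((Algebra.TensorProduct.assoc k k k H H B).toAlgHom.comp
            (Algebra.TensorProduct.map Q.comul (AlgHom.id k B))) Phi)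
      * ((Algebra.TensorProduct.map (AlgHom.id k H)
            (Algebra.TensorProduct.assoc k k k H H B).toAlgHom)
          ((Algebra.TensorProduct.assoc k k k H (H ⊗[k] H) B) (Q.Phi ⊗ₜ[k] (1 : B))))
    = (Algebra.TensorProduct.map (AlgHom.id k H)
          (Algebra.TensorProduct.map (AlgHom.id k H) lambda) Phi)
      * ((Algebra.TensorProduct.assoc k k k H H (H ⊗[k] B))
          (Algebra.TensorProduct.map Q.comul (AlgHom.id k (H ⊗[k] B)) Phi))
  counit_lambda : ∀ b : B,
    (Algebra.TensorProduct.lid k B)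
      (Algebra.TensorProduct.map Q.counit (AlgHom.id k B) (lambda b)) = b
  normal_mid :
    Algebra.TensorProduct.map (AlgHom.id k H)
      ((Algebra.TensorProduct.lid k B).toAlgHom.comp
        (Algebra.TensorProduct.map Q.counit (AlgHom.id k B))) Phi = 1
  normal_left :
    (Algebra.TensorProduct.lid k (H ⊗[k] B))
      (Algebra.TensorProduct.map Q.counit (AlgHom.id k (H ⊗[k] B)) Phi) = 1

/-- A right `H`-comodule algebra over a quasi-bialgebra (Hausser–Nill). -/
structure RightComoduleAlgebra (A : Type) [Ring A] [Algebra k A] where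
  rho : A →ₐ[k] A ⊗[k] H
  Phi : A ⊗[k] (H ⊗[k] H)
  PhiInv : A ⊗[k] (H ⊗[k] H)
  Phi_inv_mul : Phi * PhiInv = 1
  inv_Phi_mul : PhiInv * Phi = 1
  coassoc : ∀ a : A,
    Phi * (Algebra.TensorProduct.assoc k k k A H H)
        (Algebra.TensorProduct.map rho (AlgHom.id k H) (rho a))
      = Algebra.TensorProduct.map (AlgHom.id k A) Q.comul (rho a) * Phi
  pentagon :
    (Algebra.TensorProduct.includeRight (R := k) (A := A)
        (B := H ⊗[k] (H ⊗[k] H)) Q.Phi)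
      * (Algebra.TensorProduct.map (AlgHom.id k A)
          ((Algebra.TensorProduct.assoc k k k H H H).toAlgHom.comp
            (Algebra.TensorProduct.map Q.comul (AlgHom.id k H))) Phi)
      * ((Algebra.TensorProduct.map (AlgHom.id k A)
            (Algebra.TensorProduct.assoc k k k H H H).toAlgHom)
          ((Algebra.TensorProduct.assoc k k k A (H ⊗[k] H) H) (Phi ⊗ₜ[k] (1 : H))))
    = (Algebra.TensorProduct.map (AlgHom.id k A)
          (Algebra.TensorProduct.map (AlgHom.id k H) Q.comul) Phi)
      * ((Algebra.TensorProduct.assoc k k k A H (H ⊗[k] H))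
          (Algebra.TensorProduct.map rho (AlgHom.id k (H ⊗[k] H)) Phi))
  counit_rho : ∀ a : A,
    (Algebra.TensorProduct.rid k k A)
      (Algebra.TensorProduct.map (AlgHom.id k A) Q.counit (rho a)) = a
  normal_mid :
    Algebra.TensorProduct.map (AlgHom.id k A)
      ((Algebra.TensorProduct.lid k H).toAlgHom.comp
        (Algebra.TensorProduct.map Q.counit (AlgHom.id k H))) Phi = 1
  normal_right :
    Algebra.TensorProduct.map (AlgHom.id k A)
      ((Algebra.TensorProduct.rid k k H).toAlgHom.comp
        (Algebra.TensorProduct.map (AlgHom.id k H) Q.counit)) Phi = 1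


section Helpers

variable {M N P Q' : Type} [AddCommGroup M] [AddCommGroup N] [AddCommGroup P]
  [AddCommGroup Q'] [Module k M] [Module k N] [Module k P] [Module k Q']

/-- Componentwise action of `M ⊗ N` on `P ⊗ Q'` coming from actions of the factors. -/
def endTensor (f : M →ₗ[k] P →ₗ[k] P) (g : N →ₗ[k] Q' →ₗ[k] Q') :
    M ⊗[k] N →ₗ[k] (P ⊗[k] Q') →ₗ[k] (P ⊗[k] Q') :=
  (TensorProduct.homTensorHomMap (RingHom.id k) P Q' P Q').comp (TensorProduct.map f g)

end Helpers

/-- A right `H`-module coalgebra: a coalgebra in the monoidal category `M_H`. -/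
structure RightModuleCoalgebra (C : Type) [AddCommGroup C] [Module k C] where
  ract : C →ₗ[k] H →ₗ[k] C
  ract_one : ∀ c : C, ract c 1 = c
  ract_mul : ∀ (c : C) (h h' : H), ract (ract c h) h' = ract c (h * h')
  comul : C →ₗ[k] C ⊗[k] C
  counit : C →ₗ[k] k
  quasi_coassoc : ∀ c : C,
    (endTensor ract.flip (endTensor ract.flip ract.flip) Q.PhiInv)
        ((TensorProduct.assoc k C C C)
          (TensorProduct.map comul LinearMap.id (comul c)))
      = TensorProduct.map LinearMap.id comul (comul c)
  comul_ract : ∀ (c : C) (h : H),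
    comul (ract c h) = (endTensor ract.flip ract.flip) (Q.comul h) (comul c)
  counit_ract : ∀ (c : C) (h : H), counit (ract c h) = counit c * Q.counit h
  counit_comul_left : ∀ c : C,
    (TensorProduct.lid k C) (TensorProduct.map counit LinearMap.id (comul c)) = c
  counit_comul_right : ∀ c : C,
    (TensorProduct.rid k C) (TensorProduct.map LinearMap.id counit (comul c)) = c

/-- A left `H`-module algebra: an algebra in the monoidal category `_H M`
(the multiplication is only quasi-associative). -/
structure LeftModuleAlgebra (A : Type) [AddCommGroup A] [Module k A] where
  act : H →ₗ[k] A →ₗ[k] A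
  act_one : ∀ a : A, act 1 a = a
  act_mul : ∀ (h h' : H) (a : A), act (h * h') a = act h (act h' a)
  mul : A →ₗ[k] A →ₗ[k] A
  one : A
  one_mul : ∀ a : A, mul one a = a
  mul_one : ∀ a : A, mul a one = a
  quasi_assoc : ∀ a a' a'' : A,
    mul (mul a a') a''
      = TensorProduct.lift mul
          ((TensorProduct.map LinearMap.id (TensorProduct.lift mul))
            ((endTensor act (endTensor act act) Q.Phi) (a ⊗ₜ[k] (a' ⊗ₜ[k] a''))))
  act_mul_distrib : ∀ (h : H) (a a' : A),
    act h (mul a a')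
      = TensorProduct.lift mul ((endTensor act act (Q.comul h)) (a ⊗ₜ[k] a'))
  act_one_elem : ∀ h : H, act h one = Q.counit h • one


section Smash

variable {A : Type} [AddCommGroup A] [Module k A]
variable {B : Type} [Ring B] [Algebra k B]

/-- The generalized smash product multiplication `A ▶< B`:
`(a ▶< b)(a' ▶< b') = (x̃¹·a)(x̃² b₋₁ · a') ▶< x̃³ b₀ b'`, built from the
`H`-action `actA` and multiplication `mulA` on `A`, the coaction `lam` on `B`
and the (inverse) reassociator `phiInv` of the comodule algebra `B`. -/
def smashMul (mulA : A →ₗ[k] A →ₗ[k] A) (actA : H →ₗ[k] A →ₗ[k] A)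
    (lam : B →ₗ[k] H ⊗[k] B) (phiInv : H ⊗[k] (H ⊗[k] B)) :
    (A ⊗[k] B) →ₗ[k] (A ⊗[k] B) →ₗ[k] (A ⊗[k] B) :=
  let aAct : H ⊗[k] A →ₗ[k] A := TensorProduct.lift actA
  let mA : A ⊗[k] A →ₗ[k] A := TensorProduct.lift mulA
  let mH : H ⊗[k] H →ₗ[k] H := LinearMap.mul' k H
  let mB : B ⊗[k] B →ₗ[k] B := LinearMap.mul' k B
  let f : ((H ⊗[k] A) ⊗[k] ((H ⊗[k] H) ⊗[k] A)) →ₗ[k] A :=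
    mA ∘ₗ TensorProduct.map aAct (aAct ∘ₗ TensorProduct.map mH LinearMap.id)
  let g : (B ⊗[k] (B ⊗[k] B)) →ₗ[k] B := mB ∘ₗ TensorProduct.map LinearMap.id mB
  let r : (B ⊗[k] ((H ⊗[k] B) ⊗[k] B)) →ₗ[k] (H ⊗[k] (B ⊗[k] (B ⊗[k] B))) :=
    (TensorProduct.assoc k H B (B ⊗[k] B)).toLinearMap
      ∘ₗ TensorProduct.map (TensorProduct.comm k B H).toLinearMap LinearMap.id
      ∘ₗ (TensorProduct.assoc k B H (B ⊗[k] B)).symm.toLinearMap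
      ∘ₗ TensorProduct.map LinearMap.id (TensorProduct.assoc k H B B).toLinearMap
  let j2 : ((H ⊗[k] A) ⊗[k] H) →ₗ[k] ((H ⊗[k] H) ⊗[k] A) :=
    (TensorProduct.assoc k H H A).symm.toLinearMap
      ∘ₗ TensorProduct.map LinearMap.id (TensorProduct.comm k A H).toLinearMap
      ∘ₗ (TensorProduct.assoc k H A H).toLinearMap
  let j : (((H ⊗[k] A) ⊗[k] (H ⊗[k] A)) ⊗[k] H) →ₗ[k]
      ((H ⊗[k] A) ⊗[k] ((H ⊗[k] H) ⊗[k] A)) :=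
    TensorProduct.map LinearMap.id j2
      ∘ₗ (TensorProduct.assoc k (H ⊗[k] A) (H ⊗[k] A) H).toLinearMap
  let σ : ((H ⊗[k] (H ⊗[k] B)) ⊗[k] ((A ⊗[k] (H ⊗[k] B)) ⊗[k] (A ⊗[k] B))) →ₗ[k]
      (((H ⊗[k] A) ⊗[k] ((H ⊗[k] H) ⊗[k] A)) ⊗[k] (B ⊗[k] (B ⊗[k] B))) :=
    TensorProduct.map j LinearMap.id
      ∘ₗ (TensorProduct.assoc k ((H ⊗[k] A) ⊗[k] (H ⊗[k] A)) H
            (B ⊗[k] (B ⊗[k] B))).symm.toLinearMap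
      ∘ₗ TensorProduct.map (TensorProduct.tensorTensorTensorComm k H H A A).toLinearMap r
      ∘ₗ (TensorProduct.tensorTensorTensorComm k (H ⊗[k] H) B (A ⊗[k] A)
            ((H ⊗[k] B) ⊗[k] B)).toLinearMap
      ∘ₗ TensorProduct.map (TensorProduct.assoc k H H B).symm.toLinearMap
          (TensorProduct.tensorTensorTensorComm k A (H ⊗[k] B) A B).toLinearMap
  let pre : ((A ⊗[k] B) ⊗[k] (A ⊗[k] B)) →ₗ[k]
      ((A ⊗[k] (H ⊗[k] B)) ⊗[k] (A ⊗[k] B)) :=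
    TensorProduct.map (TensorProduct.map LinearMap.id lam) LinearMap.id
  (TensorProduct.lift.equiv (RingHom.id k) (A ⊗[k] B) (A ⊗[k] B) (A ⊗[k] B)).symm
    (TensorProduct.map f g ∘ₗ σ
      ∘ₗ TensorProduct.mk k (H ⊗[k] (H ⊗[k] B)) _ phiInv ∘ₗ pre)

end Smash


section PQ

variable {k : Type} [Field k] {H : Type} [Ring H] [Algebra k H]
variable {B : Type} [Ring B] [Algebra k B]

/-- `p̃_λ = X̃²_λ S⁻¹(X̃¹_λ β) ⊗ X̃³_λ`, extracted from `w = Φ_λ`. -/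
def pElt (Sinv : H →ₗ[k] H) (β : H) (w : H ⊗[k] (H ⊗[k] B)) : H ⊗[k] B :=
  (TensorProduct.map
      ((LinearMap.mul' k H) ∘ₗ (TensorProduct.comm k H H).toLinearMap
        ∘ₗ TensorProduct.map (Sinv ∘ₗ LinearMap.mulRight k β) LinearMap.id)
      LinearMap.id)
    ((TensorProduct.assoc k H H B).symm w)

/-- `q̃_λ = S(x̃¹_λ) α x̃²_λ ⊗ x̃³_λ`, extracted from `w = Φ_λ⁻¹`. -/
def qElt (S : H →ₗ[k] H) (α : H) (w : H ⊗[k] (H ⊗[k] B)) : H ⊗[k] B :=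
  (TensorProduct.map
      ((LinearMap.mul' k H) ∘ₗ TensorProduct.map S (LinearMap.mulLeft k α))
      LinearMap.id)
    ((TensorProduct.assoc k H H B).symm w)

/-- The bilinear map `(x', w) ↦ (w * p) * (x' ⊗ 1)` in `H ⊗ B`. -/
def conjR (p : H ⊗[k] B) : H →ₗ[k] (H ⊗[k] B) →ₗ[k] (H ⊗[k] B) :=
  ((LinearMap.llcomp k (H ⊗[k] B) (H ⊗[k] B) (H ⊗[k] B)).flip
      (LinearMap.mulRight k p))
    ∘ₗ ((LinearMap.mul k (H ⊗[k] B)).flip ∘ₗ (TensorProduct.mk k H B).flip 1)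

/-- The bilinear map `(x', w) ↦ ((x' ⊗ 1) * q) * w` in `H ⊗ B`. -/
def conjL (q : H ⊗[k] B) : H →ₗ[k] (H ⊗[k] B) →ₗ[k] (H ⊗[k] B) :=
  (LinearMap.mul k (H ⊗[k] B)) ∘ₗ (LinearMap.mulRight k q)
    ∘ₗ (TensorProduct.mk k H B).flip 1

end PQ

section Aux

set_option synthInstance.maxHeartbeats 1000000

variable {k : Type} [Field k] {H : Type} [Ring H] [Algebra k H]
variable {B : Type} [Ring B] [Algebra k B]

/-- The linear map `h ⊗ z ↦ z * (S⁻¹(hβ) ⊗ 1)`. -/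
def Gp (Sinv : H →ₗ[k] H) (β : H) : H ⊗[k] (H ⊗[k] B) →ₗ[k] H ⊗[k] B :=
  TensorProduct.lift ((LinearMap.mul k (H ⊗[k] B)).flip
    ∘ₗ ((TensorProduct.mk k H B).flip 1) ∘ₗ Sinv ∘ₗ LinearMap.mulRight k β)

@[simp] lemma Gp_tmul (Sinv : H →ₗ[k] H) (β h : H) (z : H ⊗[k] B) :
    (Gp Sinv β : H ⊗[k] (H ⊗[k] B) →ₗ[k] H ⊗[k] B) (h ⊗ₜ[k] z)
      = z * ((Sinv (h * β)) ⊗ₜ[k] (1 : B)) := by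
  simp [Gp]

/-- The linear map `h ⊗ z ↦ (S(h)α ⊗ 1) * z`. -/
def Gq (S : H →ₗ[k] H) (α : H) : H ⊗[k] (H ⊗[k] B) →ₗ[k] H ⊗[k] B :=
  TensorProduct.lift ((LinearMap.mul k (H ⊗[k] B))
    ∘ₗ ((TensorProduct.mk k H B).flip 1) ∘ₗ LinearMap.mulRight k α ∘ₗ S)

@[simp] lemma Gq_tmul (S : H →ₗ[k] H) (α h : H) (z : H ⊗[k] B) :
    (Gq S α : H ⊗[k] (H ⊗[k] B) →ₗ[k] H ⊗[k] B) (h ⊗ₜ[k] z)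
      = ((S h * α) ⊗ₜ[k] (1 : B)) * z := by
  simp [Gq]

@[simp] lemma pElt_tmul (Sinv : H →ₗ[k] H) (β X g : H) (c : B) :
    pElt Sinv β (X ⊗ₜ[k] (g ⊗ₜ[k] c)) = (g * Sinv (X * β)) ⊗ₜ[k] c := by
  simp [pElt]

@[simp] lemma qElt_tmul (S : H →ₗ[k] H) (α x g : H) (c : B) :
    qElt S α (x ⊗ₜ[k] (g ⊗ₜ[k] c)) = (S x * (α * g)) ⊗ₜ[k] c := by
  simp [qElt]

@[simp] lemma pElt_zero (Sinv : H →ₗ[k] H) (β : H) :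
    pElt (B := B) Sinv β 0 = 0 := by simp [pElt]

lemma pElt_add (Sinv : H →ₗ[k] H) (β : H) (w₁ w₂ : H ⊗[k] (H ⊗[k] B)) :
    pElt Sinv β (w₁ + w₂) = pElt Sinv β w₁ + pElt Sinv β w₂ := by
  simp [pElt, map_add]

@[simp] lemma qElt_zero (S : H →ₗ[k] H) (α : H) :
    qElt (B := B) S α 0 = 0 := by simp [qElt]

lemma qElt_add (S : H →ₗ[k] H) (α : H) (w₁ w₂ : H ⊗[k] (H ⊗[k] B)) :
    qElt S α (w₁ + w₂) = qElt S α w₁ + qElt S α w₂ := by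
  simp [qElt, map_add]

@[simp] lemma conjR_apply (p : H ⊗[k] B) (x : H) (z : H ⊗[k] B) :
    conjR p x z = (z * p) * (x ⊗ₜ[k] (1 : B)) := by
  simp [conjR]

@[simp] lemma conjL_apply (q : H ⊗[k] B) (x : H) (z : H ⊗[k] B) :
    conjL q x z = ((x ⊗ₜ[k] (1 : B)) * q) * z := by
  simp [conjL]

lemma lift_conjR_add (p p' : H ⊗[k] B) (v : H ⊗[k] (H ⊗[k] B)) :
    TensorProduct.lift (conjR (p + p')) v
      = TensorProduct.lift (conjR p) v + TensorProduct.lift (conjR p') v := by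
  induction v using TensorProduct.induction_on with
  | zero => simp
  | tmul x z => simp [mul_add, add_mul]
  | add x y hx hy => simp [map_add, hx, hy]; abel

lemma lift_conjL_add (q q' : H ⊗[k] B) (v : H ⊗[k] (H ⊗[k] B)) :
    TensorProduct.lift (conjL (q + q')) v
      = TensorProduct.lift (conjL q) v + TensorProduct.lift (conjL q') v := by
  induction v using TensorProduct.induction_on with
  | zero => simp
  | tmul x z => simp [mul_add, add_mul]
  | add x y hx hy => simp [map_add, hx, hy]; abel

@[simp] lemma lift_conjR_zero (v : H ⊗[k] (H ⊗[k] B)) :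
    TensorProduct.lift (conjR (0 : H ⊗[k] B)) v = 0 := by
  induction v using TensorProduct.induction_on with
  | zero => simp
  | tmul x z => simp
  | add x y hx hy => simp [map_add, hx, hy]

@[simp] lemma lift_conjL_zero (v : H ⊗[k] (H ⊗[k] B)) :
    TensorProduct.lift (conjL (0 : H ⊗[k] B)) v = 0 := by
  induction v using TensorProduct.induction_on with
  | zero => simp
  | tmul x z => simp
  | add x y hx hy => simp [map_add, hx, hy]

end Aux


section Main

variable {k : Type} [Field k] {H : Type} [Ring H] [Algebra k H]
variable {B : Type} [Ring B] [Algebra k B]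

lemma Sinv_anti {Q : QuasiBialgebra k H} {S Sinv : H →ₗ[k] H} {α β : H}
    (hS : IsAntipode Q S α β)
    (hinv₁ : ∀ h : H, Sinv (S h) = h) (hinv₂ : ∀ h : H, S (Sinv h) = h)
    (a b : H) : Sinv (a * b) = Sinv b * Sinv a := by
  have h := hS.anti_mul (Sinv b) (Sinv a)
  rw [hinv₂, hinv₂] at h
  calc Sinv (a * b) = Sinv (S (Sinv b * Sinv a)) := by rw [h]
    _ = Sinv b * Sinv a := hinv₁ _

lemma hA_p (Sinv : H →ₗ[k] H) (β : H)
    (hanti : ∀ a b : H, Sinv (a * b) = Sinv b * Sinv a)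
    (lam : B →ₐ[k] H ⊗[k] B)
    (u : H ⊗[k] B) (w : H ⊗[k] (H ⊗[k] B)) :
    TensorProduct.lift (conjR (pElt Sinv β w))
        ((TensorProduct.map Sinv lam.toLinearMap) u)
      = Gp Sinv β ((Algebra.TensorProduct.map (AlgHom.id k H) lam) u * w) := by
  induction u using TensorProduct.induction_on with
  | zero => simp
  | add x y hx hy => simp only [map_add, add_mul, hx, hy]
  | tmul h b0 =>
    induction w using TensorProduct.induction_on with
    | zero => simp
    | add w₁ w₂ h₁ h₂ =>
      simp only [pElt_add, lift_conjR_add, mul_add, map_add, h₁, h₂]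
    | tmul X y =>
      induction y using TensorProduct.induction_on with
      | zero => simp
      | add y₁ y₂ h₁ h₂ =>
        simp only [TensorProduct.tmul_add, pElt_add, lift_conjR_add,
          mul_add, map_add, h₁, h₂]
      | tmul g c =>
        simp only [pElt_tmul, TensorProduct.map_tmul, TensorProduct.lift.tmul,
          conjR_apply, Algebra.TensorProduct.map_tmul, AlgHom.coe_id, id_eq,
          Algebra.TensorProduct.tmul_mul_tmul, Gp_tmul, AlgHom.toLinearMap_apply]
        simp [hanti, mul_assoc]

lemma hB_p {Q : QuasiBialgebra k H} {S Sinv : H →ₗ[k] H} {α β : H}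
    (hS : IsAntipode Q S α β)
    (hinv₁ : ∀ h : H, Sinv (S h) = h)
    (hanti : ∀ a b : H, Sinv (a * b) = Sinv b * Sinv a)
    (u : H ⊗[k] B) (w : H ⊗[k] (H ⊗[k] B)) :
    Gp Sinv β (w * (Algebra.TensorProduct.assoc k k k H H B)
        ((Algebra.TensorProduct.map Q.comul (AlgHom.id k B)) u))
      = pElt Sinv β w * ((1 : H) ⊗ₜ[k]
          ((Algebra.TensorProduct.lid k B)
            ((Algebra.TensorProduct.map Q.counit (AlgHom.id k B)) u))) := by
  induction u using TensorProduct.induction_on with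
  | zero => simp
  | add x y hx hy => simp only [map_add, mul_add, TensorProduct.tmul_add, hx, hy]
  | tmul h b0 =>
    induction w using TensorProduct.induction_on with
    | zero => simp
    | add w₁ w₂ h₁ h₂ => simp only [pElt_add, add_mul, map_add, h₁, h₂]
    | tmul X y =>
      induction y using TensorProduct.induction_on with
      | zero => simp
      | add y₁ y₂ h₁ h₂ =>
        simp only [TensorProduct.tmul_add, pElt_add, add_mul, map_add, h₁, h₂]
      | tmul g c =>
        have key : ∀ d : H ⊗[k] H,
            Gp Sinv β ((X ⊗ₜ[k] (g ⊗ₜ[k] c)) *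
                (Algebra.TensorProduct.assoc k k k H H B) (d ⊗ₜ[k] b0))
              = (g * Sinv ((LinearMap.mul' k H)
                    ((TensorProduct.map (LinearMap.mulRight k β) S) d)) * Sinv X)
                  ⊗ₜ[k] (c * b0) := by
          intro d
          induction d using TensorProduct.induction_on with
          | zero => simp [TensorProduct.zero_tmul]
          | add d₁ d₂ h₁ h₂ =>
            simp only [TensorProduct.add_tmul, map_add, mul_add, add_mul, h₁, h₂]
          | tmul g₁ g₂ =>
            simp only [Algebra.TensorProduct.assoc_tmul,
              Algebra.TensorProduct.tmul_mul_tmul, Gp_tmul,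
              TensorProduct.map_tmul, LinearMap.mul'_apply,
              LinearMap.mulRight_apply]
            simp [hanti, hinv₁, mul_assoc]
        simp only [Algebra.TensorProduct.map_tmul, AlgHom.coe_id, id_eq,
          Algebra.TensorProduct.lid_tmul, pElt_tmul]
        rw [key (Q.comul h), hS.right_id h, map_smul]
        simp [hanti, mul_smul_comm, smul_mul_assoc, TensorProduct.smul_tmul',
          TensorProduct.tmul_smul, mul_assoc]

lemma hA_q (S : H →ₗ[k] H) (α : H)
    (hanti : ∀ a b : H, S (a * b) = S b * S a)
    (lam : B →ₐ[k] H ⊗[k] B)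
    (u : H ⊗[k] B) (w : H ⊗[k] (H ⊗[k] B)) :
    TensorProduct.lift (conjL (qElt S α w))
        ((TensorProduct.map S lam.toLinearMap) u)
      = Gq S α (w * (Algebra.TensorProduct.map (AlgHom.id k H) lam) u) := by
  induction u using TensorProduct.induction_on with
  | zero => simp
  | add x y hx hy => simp only [map_add, mul_add, hx, hy]
  | tmul h b0 =>
    induction w using TensorProduct.induction_on with
    | zero => simp
    | add w₁ w₂ h₁ h₂ =>
      simp only [qElt_add, lift_conjL_add, add_mul, map_add, h₁, h₂]
    | tmul x y =>
      induction y using TensorProduct.induction_on with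
      | zero => simp
      | add y₁ y₂ h₁ h₂ =>
        simp only [TensorProduct.tmul_add, qElt_add, lift_conjL_add,
          add_mul, map_add, h₁, h₂]
      | tmul g c =>
        simp only [qElt_tmul, TensorProduct.map_tmul, TensorProduct.lift.tmul,
          conjL_apply, Algebra.TensorProduct.map_tmul, AlgHom.coe_id, id_eq,
          Algebra.TensorProduct.tmul_mul_tmul, Gq_tmul, AlgHom.toLinearMap_apply]
        conv_rhs => rw [← mul_assoc]
        congr 1
        simp [hanti, mul_assoc]

lemma hB_q {Q : QuasiBialgebra k H} {S : H →ₗ[k] H} {α β : H}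
    (hS : IsAntipode Q S α β)
    (u : H ⊗[k] B) (w : H ⊗[k] (H ⊗[k] B)) :
    Gq S α ((Algebra.TensorProduct.assoc k k k H H B)
        ((Algebra.TensorProduct.map Q.comul (AlgHom.id k B)) u) * w)
      = ((1 : H) ⊗ₜ[k]
          ((Algebra.TensorProduct.lid k B)
            ((Algebra.TensorProduct.map Q.counit (AlgHom.id k B)) u)))
          * qElt S α w := by
  induction u using TensorProduct.induction_on with
  | zero => simp
  | add x y hx hy => simp only [map_add, add_mul, TensorProduct.tmul_add, hx, hy]
  | tmul h b0 =>
    induction w using TensorProduct.induction_on with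
    | zero => simp
    | add w₁ w₂ h₁ h₂ => simp only [qElt_add, mul_add, map_add, h₁, h₂]
    | tmul x y =>
      induction y using TensorProduct.induction_on with
      | zero => simp
      | add y₁ y₂ h₁ h₂ =>
        simp only [TensorProduct.tmul_add, qElt_add, mul_add, map_add, h₁, h₂]
      | tmul g c =>
        have key : ∀ d : H ⊗[k] H,
            Gq S α ((Algebra.TensorProduct.assoc k k k H H B) (d ⊗ₜ[k] b0)
                * (x ⊗ₜ[k] (g ⊗ₜ[k] c)))
              = (S x * ((LinearMap.mul' k H)
                    ((TensorProduct.map S (LinearMap.mulLeft k α)) d) * g))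
                  ⊗ₜ[k] (b0 * c) := by
          intro d
          induction d using TensorProduct.induction_on with
          | zero => simp [TensorProduct.zero_tmul]
          | add d₁ d₂ h₁ h₂ =>
            simp only [TensorProduct.add_tmul, map_add, mul_add, add_mul, h₁, h₂]
          | tmul g₁ g₂ =>
            simp only [Algebra.TensorProduct.assoc_tmul,
              Algebra.TensorProduct.tmul_mul_tmul, Gq_tmul,
              TensorProduct.map_tmul, LinearMap.mul'_apply,
              LinearMap.mulLeft_apply]
            simp [hS.anti_mul, mul_assoc]
        simp only [Algebra.TensorProduct.map_tmul, AlgHom.coe_id, id_eq,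
          Algebra.TensorProduct.lid_tmul, qElt_tmul]
        rw [key (Q.comul h), hS.left_id h]
        simp [mul_smul_comm, smul_mul_assoc, TensorProduct.smul_tmul',
          TensorProduct.tmul_smul, mul_assoc]

end Main


/-- STATEMENT 5: `λ(b₀) p̃_λ [S⁻¹(b₋₁) ⊗ 1] = p̃_λ [1 ⊗ b]` and
`[S(b₋₁) ⊗ 1] q̃_λ λ(b₀) = [1 ⊗ b] q̃_λ` for all `b ∈ B`. -/
theorem pq_coaction_identities
    {k : Type} [Field k] {H : Type} [Ring H] [Algebra k H]
    {B : Type} [Ring B] [Algebra k B]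
    (Q : QuasiBialgebra k H) (S Sinv : H →ₗ[k] H) (α β : H)
    (hS : IsAntipode Q S α β)
    (hinv₁ : ∀ h : H, Sinv (S h) = h) (hinv₂ : ∀ h : H, S (Sinv h) = h)
    (L : LeftComoduleAlgebra Q B) :
    ∀ b : B,
      (TensorProduct.lift (conjR (pElt Sinv β L.Phi)))
          ((TensorProduct.map Sinv L.lambda.toLinearMap) (L.lambda b))
        = pElt Sinv β L.Phi * ((1 : H) ⊗ₜ[k] b)
      ∧ (TensorProduct.lift (conjL (qElt S α L.PhiInv)))
          ((TensorProduct.map S L.lambda.toLinearMap) (L.lambda b))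
        = ((1 : H) ⊗ₜ[k] b) * qElt S α L.PhiInv := by
  intro b
  have hanti : ∀ a b : H, Sinv (a * b) = Sinv b * Sinv a :=
    Sinv_anti hS hinv₁ hinv₂
  have hcoassoc := L.coassoc b
  have hcoassoc' :
      L.PhiInv * (Algebra.TensorProduct.map (AlgHom.id k H) L.lambda) (L.lambda b)
        = (Algebra.TensorProduct.assoc k k k H H B)
            ((Algebra.TensorProduct.map Q.comul (AlgHom.id k B)) (L.lambda b))
            * L.PhiInv := by
    set A := (Algebra.TensorProduct.map (AlgHom.id k H) L.lambda) (L.lambda b)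
    set C := (Algebra.TensorProduct.assoc k k k H H B)
        ((Algebra.TensorProduct.map Q.comul (AlgHom.id k B)) (L.lambda b))
    calc L.PhiInv * A = L.PhiInv * A * (L.Phi * L.PhiInv) := by
            rw [L.Phi_inv_mul, mul_one]
      _ = L.PhiInv * (A * L.Phi) * L.PhiInv := by
            rw [← mul_assoc, mul_assoc L.PhiInv A L.Phi]
      _ = L.PhiInv * (L.Phi * C) * L.PhiInv := by rw [hcoassoc]
      _ = C * L.PhiInv := by rw [← mul_assoc, L.inv_Phi_mul, one_mul]
  constructor
  · calc TensorProduct.lift (conjR (pElt Sinv β L.Phi))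
          ((TensorProduct.map Sinv L.lambda.toLinearMap) (L.lambda b))
        = Gp Sinv β ((Algebra.TensorProduct.map (AlgHom.id k H) L.lambda)
            (L.lambda b) * L.Phi) := hA_p Sinv β hanti L.lambda (L.lambda b) L.Phi
      _ = Gp Sinv β (L.Phi * (Algebra.TensorProduct.assoc k k k H H B)
            ((Algebra.TensorProduct.map Q.comul (AlgHom.id k B)) (L.lambda b))) := by
          rw [hcoassoc]
      _ = pElt Sinv β L.Phi * ((1 : H) ⊗ₜ[k]
            ((Algebra.TensorProduct.lid k B)
              ((Algebra.TensorProduct.map Q.counit (AlgHom.id k B)) (L.lambda b)))) :=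
          hB_p hS hinv₁ hanti (L.lambda b) L.Phi
      _ = pElt Sinv β L.Phi * ((1 : H) ⊗ₜ[k] b) := by rw [L.counit_lambda b]
  · calc TensorProduct.lift (conjL (qElt S α L.PhiInv))
          ((TensorProduct.map S L.lambda.toLinearMap) (L.lambda b))
        = Gq S α (L.PhiInv * (Algebra.TensorProduct.map (AlgHom.id k H) L.lambda)
            (L.lambda b)) := hA_q S α hS.anti_mul L.lambda (L.lambda b) L.PhiInv
      _ = Gq S α ((Algebra.TensorProduct.assoc k k k H H B)
            ((Algebra.TensorProduct.map Q.comul (AlgHom.id k B)) (L.lambda b))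
            * L.PhiInv) := by rw [hcoassoc']
      _ = ((1 : H) ⊗ₜ[k]
            ((Algebra.TensorProduct.lid k B)
              ((Algebra.TensorProduct.map Q.counit (AlgHom.id k B)) (L.lambda b))))
            * qElt S α L.PhiInv := hB_q hS (L.lambda b) L.PhiInv
      _ = ((1 : H) ⊗ₜ[k] b) * qElt S α L.PhiInv := by rw [L.counit_lambda b]

end QuasiHopfPaper
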